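/- The map P⁺ sending (a,b,c,q̄) to (a, 2a+b, a+b+c, q̄) if 4a+2b+c < 0 and to (−a−b−c, −2a−b, −a, q̄) if 4a+2b+c > 0 maps prototypes of discriminant D to prototypes of discriminant D. -/

import Mathlib

/-- A prototype of discriminant `D`: a quadruple `(a, b, c, q)` with
`b² − 4ac = D`, `a > 0`, `c < 0`, `gcd(a,b,c,q) = 1`, `a + b + c < 0`. -/
def IsPrototype (D : ℤ) (P : ℤ × ℤ × ℤ × ℤ) : Prop :=
  P.2.1 ^ 2 - 4 * P.1 * P.2.2.1 = D ∧ 0 < P.1 ∧ P.2.2.1 < 0 ∧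
    Int.gcd P.1 (Int.gcd P.2.1 (Int.gcd P.2.2.1 P.2.2.2)) = 1 ∧
    P.1 + P.2.1 + P.2.2.1 < 0

/-- The "next prototype" map `P ↦ P⁺`. -/
def protoPlus (P : ℤ × ℤ × ℤ × ℤ) : ℤ × ℤ × ℤ × ℤ :=
  if 4 * P.1 + 2 * P.2.1 + P.2.2.1 < 0 then
    (P.1, 2 * P.1 + P.2.1, P.1 + P.2.1 + P.2.2.1, P.2.2.2)
  else
    (-P.1 - P.2.1 - P.2.2.1, -2 * P.1 - P.2.1, -P.1, P.2.2.2)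

private lemma gcd4_dvd (a b c q a' b' c' : ℤ)
    (h : ∀ d : ℤ, d ∣ a → d ∣ b → d ∣ c → d ∣ a' ∧ d ∣ b' ∧ d ∣ c') :
    Int.gcd a (Int.gcd b (Int.gcd c q)) ∣ Int.gcd a' (Int.gcd b' (Int.gcd c' q)) := by
  have ha : (↑(Int.gcd a (Int.gcd b (Int.gcd c q))) : ℤ) ∣ a := (Int.gcd_dvd_left ..)
  have hrest : (↑(Int.gcd a (Int.gcd b (Int.gcd c q))) : ℤ) ∣ (Int.gcd b (Int.gcd c q) : ℤ) :=
    (Int.gcd_dvd_right ..)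
  have hb := hrest.trans (Int.gcd_dvd_left ..)
  have hrest2 := hrest.trans (Int.gcd_dvd_right ..)
  have hc := hrest2.trans (Int.gcd_dvd_left ..)
  have hq := hrest2.trans (Int.gcd_dvd_right ..)
  obtain ⟨ha', hb', hc'⟩ := h _ ha hb hc
  exact Int.natCast_dvd_natCast.mp (Int.dvd_coe_gcd ha' (Int.dvd_coe_gcd hb' (Int.dvd_coe_gcd hc' hq)))

private lemma gcd4_eq (a b c q a' b' c' : ℤ)
    (h1 : ∀ d : ℤ, d ∣ a → d ∣ b → d ∣ c → d ∣ a' ∧ d ∣ b' ∧ d ∣ c')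
    (h2 : ∀ d : ℤ, d ∣ a' → d ∣ b' → d ∣ c' → d ∣ a ∧ d ∣ b ∧ d ∣ c) :
    Int.gcd a' (Int.gcd b' (Int.gcd c' q)) = Int.gcd a (Int.gcd b (Int.gcd c q)) :=
  Nat.dvd_antisymm (gcd4_dvd a' b' c' q a b c h2) (gcd4_dvd a b c q a' b' c' h1)

private lemma dvd_lc {d x y t : ℤ} (hx : d ∣ x) (hy : d ∣ y) (m n : ℤ)
    (h : t = m * x + n * y) : d ∣ t :=
  h ▸ dvd_add (hx.mul_left m) (hy.mul_left n)

/-- `P⁺` maps prototypes of nonsquare discriminant `D` to prototypes of discriminant `D`. -/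
theorem protoPlus_isPrototype (D : ℤ) (hD : 0 < D) (hns : ¬ IsSquare D)
    (P : ℤ × ℤ × ℤ × ℤ) (hP : IsPrototype D P) :
    IsPrototype D (protoPlus P) := by
  obtain ⟨a, b, c, q⟩ := P
  obtain ⟨hdisc, ha, hc, hgcd, hsum⟩ := hP
  simp only at hdisc ha hc hgcd hsum
  have hne : 4 * a + 2 * b + c ≠ 0 := by
    intro h
    apply hns
    refine ⟨b + 4 * a, ?_⟩
    have hcval : c = -4 * a - 2 * b := by linarith
    rw [← hdisc, hcval]; ring
  unfold protoPlus IsPrototype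
  by_cases hcase : 4 * a + 2 * b + c < 0
  · simp only [hcase, if_pos]
    refine ⟨by rw [← hdisc]; ring, ha, hsum, ?_, by linarith⟩
    rw [gcd4_eq a b c q a (2 * a + b) (a + b + c)
      (fun d hda hdb hdc => by
        have h1 : d ∣ a + b := dvd_lc hda hdb 1 1 (by ring)
        exact ⟨hda, dvd_lc hda hdb 2 1 (by ring), dvd_lc h1 hdc 1 1 (by ring)⟩)
      (fun d hda hdb hdc => by
        have h1 : d ∣ b := dvd_lc hda hdb (-2) 1 (by ring)
        have h2 : d ∣ -a - b := dvd_lc hda h1 (-1) (-1) (by ring)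
        exact ⟨hda, h1, dvd_lc hdc h2 1 1 (by ring)⟩)]
    exact hgcd
  · have hpos : 0 < 4 * a + 2 * b + c := by omega
    simp only [hcase, if_neg, not_false_iff]
    refine ⟨by rw [← hdisc]; ring, by linarith, by linarith, ?_, by linarith⟩
    rw [gcd4_eq a b c q (-a - b - c) (-2 * a - b) (-a)
      (fun d hda hdb hdc => by
        have h1 : d ∣ -a - b := dvd_lc hda hdb (-1) (-1) (by ring)
        exact ⟨dvd_lc h1 hdc 1 (-1) (by ring), dvd_lc hda hdb (-2) (-1) (by ring),
          dvd_lc hda hda (-1) 0 (by ring)⟩)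
      (fun d hda' hdb' hdc' => by
        have hA : d ∣ a := dvd_lc hdc' hdc' (-1) 0 (by ring)
        have hB : d ∣ b := dvd_lc hdb' hA (-1) (-2) (by ring)
        have h1 : d ∣ -a - b := dvd_lc hA hB (-1) (-1) (by ring)
        exact ⟨hA, hB, dvd_lc hda' h1 (-1) 1 (by ring)⟩)]
    exact hgcd
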